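/- Suppose the material is macro-homogeneous at scale r₀ and that C_{r₀} := Σ_{r : |r| > r₀} |X_r|/|X| is strictly positive. Then the variance of the phase fraction is given exactly by Var[Φ] = (1/C_{r₀}) · Σ_{r : |r| ≤ r₀} (|X_r|/|X|) · (E[T_r] − E[Φ²]). -/

import Mathlib

open MeasureTheory Finset
open scoped Classical

/-- Under macro-homogeneity at scale `r₀` and `C_{r₀} > 0`,
`Var[Φ] = (1/C_{r₀}) Σ_{|r|≤r₀} (|X_r|/|X|) (E[T_r] − E[Φ²])`. -/
theorem variance_from_tpc_expectations
    {Ω : Type*} [MeasurableSpace Ω] (P : Measure Ω) [IsProbabilityMeasure P]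
    (l₁ l₂ : ℕ) (hl₁ : 0 < l₁) (hl₂ : 0 < l₂)
    (X : Finset (ℤ × ℤ))
    (hX : X = (Finset.Ico (0 : ℤ) (l₁ : ℤ)) ×ˢ (Finset.Ico (0 : ℤ) (l₂ : ℤ)))
    (B : ℤ × ℤ → Ω → ℝ)
    (hBmeas : ∀ x, Measurable (B x))
    (hB01 : ∀ x ω, B x ω = 0 ∨ B x ω = 1)
    (Φ : Ω → ℝ)
    (hΦ : ∀ ω, Φ ω = (1 / (X.card : ℝ)) * ∑ x ∈ X, B x ω)
    (Xr : ℤ × ℤ → Finset (ℤ × ℤ))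
    (hXr : ∀ r, Xr r = X.filter (fun x => x + r ∈ X))
    (T : ℤ × ℤ → Ω → ℝ)
    (hT : ∀ r ω, T r ω = (1 / ((Xr r).card : ℝ)) * ∑ x ∈ Xr r, B x ω * B (x + r) ω)
    (D : Finset (ℤ × ℤ))
    (hD : D = (X ×ˢ X).image (fun p => p.1 - p.2))
    (r₀ : ℝ) (hr₀ : 0 < r₀)
    (hmacro : ∀ r ∈ D, r₀ < Real.sqrt ((r.1 : ℝ) ^ 2 + (r.2 : ℝ) ^ 2) →
      ∫ ω, T r ω ∂P = (∫ ω, Φ ω ∂P) ^ 2)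
    (C : ℝ)
    (hC : C = ∑ r ∈ D.filter (fun r => r₀ < Real.sqrt ((r.1 : ℝ) ^ 2 + (r.2 : ℝ) ^ 2)),
      ((Xr r).card : ℝ) / (X.card : ℝ))
    (hCpos : 0 < C) :
    ProbabilityTheory.variance Φ P = (1 / C) *
      ∑ r ∈ D.filter (fun r => Real.sqrt ((r.1 : ℝ) ^ 2 + (r.2 : ℝ) ^ 2) ≤ r₀),
        (((Xr r).card : ℝ) / (X.card : ℝ)) * ((∫ ω, T r ω ∂P) - ∫ ω, (Φ ω) ^ 2 ∂P) := by
  -- Notation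
  set N : ℝ := (X.card : ℝ) with hN
  -- X is nonempty
  have hmemX : ((0 : ℤ), (0 : ℤ)) ∈ X := by
    rw [hX]; simp [Finset.mem_product, Finset.mem_Ico]
    exact ⟨by exact_mod_cast hl₁, by exact_mod_cast hl₂⟩
  have hNpos : 0 < N := by
    have h : 0 < X.card := Finset.card_pos.mpr ⟨_, hmemX⟩
    rw [hN]; exact_mod_cast h
  have hNne : N ≠ 0 := ne_of_gt hNpos
  -- Bounds on B
  have hB0 : ∀ x ω, 0 ≤ B x ω := by
    intro x ω; rcases hB01 x ω with h | h <;> simp [h]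
  have hB1 : ∀ x ω, B x ω ≤ 1 := by
    intro x ω; rcases hB01 x ω with h | h <;> simp [h]
  -- Integrability of products
  have hint : ∀ x y : ℤ × ℤ, Integrable (fun ω => B x ω * B y ω) P := by
    intro x y
    refine Integrable.mono' (integrable_const 1)
      ((hBmeas x).mul (hBmeas y)).aestronglyMeasurable ?_
    filter_upwards with ω
    rw [Real.norm_eq_abs, abs_of_nonneg (mul_nonneg (hB0 x ω) (hB0 y ω))]
    exact mul_le_one₀ (hB1 x ω) (hB0 y ω) (hB1 y ω)
  set g : ℤ × ℤ → ℤ × ℤ → ℝ := fun x y => ∫ ω, B x ω * B y ω ∂P with hg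
  -- Key combinatorial identity
  have key : ∀ F : ℤ × ℤ → ℤ × ℤ → ℝ,
      ∑ r ∈ D, ∑ x ∈ Xr r, F x (x + r) = ∑ p ∈ X ×ˢ X, F p.2 p.1 := by
    intro F
    have hmaps : ∀ p ∈ X ×ˢ X, (fun p : (ℤ×ℤ)×(ℤ×ℤ) => p.1 - p.2) p ∈ D := by
      intro p hp; rw [hD]; exact Finset.mem_image_of_mem _ hp
    have h := Finset.sum_fiberwise_of_maps_to hmaps (fun p => F p.2 p.1)
    rw [← h]
    refine Finset.sum_congr rfl fun r hr => ?_
    refine Finset.sum_nbij' (i := fun x => ((x + r, x) : (ℤ×ℤ)×(ℤ×ℤ)))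
      (j := fun p => p.2) ?_ ?_ ?_ ?_ ?_
    · intro x hx
      rw [hXr r, Finset.mem_filter] at hx
      simp only [Finset.mem_filter, Finset.mem_product]
      exact ⟨⟨hx.2, hx.1⟩, by ring⟩
    · intro p hp
      simp only [Finset.mem_filter, Finset.mem_product] at hp
      rw [hXr r, Finset.mem_filter]
      refine ⟨hp.1.2, ?_⟩
      have : p.2 + r = p.1 := by rw [← hp.2]; ring
      rw [this]; exact hp.1.1
    · intro x hx; rfl
    · intro p hp
      simp only [Finset.mem_filter, Finset.mem_product] at hp
      have : p.2 + r = p.1 := by rw [← hp.2]; ring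
      ext <;> simp [this]
    · intro x hx; rfl
  -- |X_r| * E[T_r] = Σ_{x ∈ X_r} g x (x+r)
  have hTr : ∀ r, ((Xr r).card : ℝ) * (∫ ω, T r ω ∂P) = ∑ x ∈ Xr r, g x (x + r) := by
    intro r
    have hint' : ∫ ω, T r ω ∂P
        = (1 / ((Xr r).card : ℝ)) * ∑ x ∈ Xr r, g x (x + r) := by
      have : ∀ ω, T r ω = (1 / ((Xr r).card : ℝ)) * ∑ x ∈ Xr r, B x ω * B (x + r) ω :=
        hT r
      calc ∫ ω, T r ω ∂P
          = ∫ ω, (1 / ((Xr r).card : ℝ)) * ∑ x ∈ Xr r, B x ω * B (x + r) ω ∂P := by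
            exact integral_congr_ae (Filter.Eventually.of_forall this)
        _ = (1 / ((Xr r).card : ℝ)) * ∫ ω, ∑ x ∈ Xr r, B x ω * B (x + r) ω ∂P := by
            rw [integral_const_mul]
        _ = (1 / ((Xr r).card : ℝ)) * ∑ x ∈ Xr r, g x (x + r) := by
            rw [integral_finset_sum _ (fun x _ => hint x (x + r))]
    rw [hint']
    rcases eq_or_ne ((Xr r).card : ℝ) 0 with h | h
    · have hempty : Xr r = ∅ := by
        have : (Xr r).card = 0 := by exact_mod_cast h
        exact Finset.card_eq_zero.mp this
      simp [h, hempty]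
    · field_simp
  -- Σ_r |X_r| E[T_r] = N² E[Φ²]
  set S : ℝ := ∫ ω, (Φ ω) ^ 2 ∂P with hS
  have hswap : ∑ p ∈ X ×ˢ X, g p.2 p.1 = ∑ p ∈ X ×ˢ X, g p.1 p.2 := by
    rw [Finset.sum_product, Finset.sum_product]
    exact Finset.sum_comm
  have hΦ2 : ∀ ω, (Φ ω) ^ 2 = (1 / N) ^ 2 * ∑ p ∈ X ×ˢ X, B p.1 ω * B p.2 ω := by
    intro ω
    rw [hΦ ω, mul_pow, Finset.sum_product]
    congr 1
    rw [sq, Finset.sum_mul_sum]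
  have hSval : N ^ 2 * S = ∑ p ∈ X ×ˢ X, g p.1 p.2 := by
    have : S = (1 / N) ^ 2 * ∑ p ∈ X ×ˢ X, g p.1 p.2 := by
      calc S = ∫ ω, (1 / N) ^ 2 * ∑ p ∈ X ×ˢ X, B p.1 ω * B p.2 ω ∂P :=
            integral_congr_ae (Filter.Eventually.of_forall hΦ2)
        _ = (1 / N) ^ 2 * ∫ ω, ∑ p ∈ X ×ˢ X, B p.1 ω * B p.2 ω ∂P := by
            rw [integral_const_mul]
        _ = (1 / N) ^ 2 * ∑ p ∈ X ×ˢ X, g p.1 p.2 := by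
            rw [integral_finset_sum _ (fun p _ => hint p.1 p.2)]
    rw [this]; field_simp
  have hsum1 : ∑ r ∈ D, ((Xr r).card : ℝ) * (∫ ω, T r ω ∂P) = N ^ 2 * S := by
    calc ∑ r ∈ D, ((Xr r).card : ℝ) * (∫ ω, T r ω ∂P)
        = ∑ r ∈ D, ∑ x ∈ Xr r, g x (x + r) := Finset.sum_congr rfl fun r _ => hTr r
      _ = ∑ p ∈ X ×ˢ X, g p.2 p.1 := key g
      _ = ∑ p ∈ X ×ˢ X, g p.1 p.2 := hswap
      _ = N ^ 2 * S := hSval.symm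
  have hsum2 : ∑ r ∈ D, ((Xr r).card : ℝ) = N ^ 2 := by
    have := key (fun _ _ => (1 : ℝ))
    simpa [Finset.sum_const, Finset.card_product, sq, Nat.cast_mul] using this
  -- total sum over D vanishes
  have htot : ∑ r ∈ D, (((Xr r).card : ℝ) / N) * ((∫ ω, T r ω ∂P) - S) = 0 := by
    have hexp : ∑ r ∈ D, (((Xr r).card : ℝ) / N) * ((∫ ω, T r ω ∂P) - S)
        = ∑ r ∈ D, ((1 / N) * (((Xr r).card : ℝ) * (∫ ω, T r ω ∂P))
            - (S / N) * ((Xr r).card : ℝ)) :=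
      Finset.sum_congr rfl fun r _ => by ring
    rw [hexp, Finset.sum_sub_distrib, ← Finset.mul_sum, ← Finset.mul_sum, hsum1, hsum2]
    ring
  -- split D
  set pnear : ℤ × ℤ → Prop := fun r => Real.sqrt ((r.1 : ℝ) ^ 2 + (r.2 : ℝ) ^ 2) ≤ r₀
    with hpnear
  have hfilter : D.filter (fun r => ¬ pnear r)
      = D.filter (fun r => r₀ < Real.sqrt ((r.1 : ℝ) ^ 2 + (r.2 : ℝ) ^ 2)) := by
    apply Finset.filter_congr
    intro r _; simp [hpnear, not_le]
  set μ : ℝ := ∫ ω, Φ ω ∂P with hμ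
  have hfar : ∑ r ∈ D.filter (fun r => ¬ pnear r),
      (((Xr r).card : ℝ) / N) * ((∫ ω, T r ω ∂P) - S) = C * (μ ^ 2 - S) := by
    rw [hfilter]
    have : ∀ r ∈ D.filter (fun r => r₀ < Real.sqrt ((r.1 : ℝ) ^ 2 + (r.2 : ℝ) ^ 2)),
        (((Xr r).card : ℝ) / N) * ((∫ ω, T r ω ∂P) - S)
          = (((Xr r).card : ℝ) / N) * (μ ^ 2 - S) := by
      intro r hr
      rw [Finset.mem_filter] at hr
      rw [hmacro r hr.1 hr.2, hμ]
    rw [Finset.sum_congr rfl this, ← Finset.sum_mul, hC]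
  have hnear : ∑ r ∈ D.filter pnear,
      (((Xr r).card : ℝ) / N) * ((∫ ω, T r ω ∂P) - S) = C * (S - μ ^ 2) := by
    have hsplit := Finset.sum_filter_add_sum_filter_not D pnear
      (fun r => (((Xr r).card : ℝ) / N) * ((∫ ω, T r ω ∂P) - S))
    rw [hfar, htot] at hsplit
    linarith
  -- variance
  have hΦmeas : Measurable Φ := by
    have : Φ = fun ω => (1 / N) * ∑ x ∈ X, B x ω := funext hΦ
    rw [this]
    exact (Finset.measurable_sum X fun x _ => hBmeas x).const_mul _
  have hΦbdd : ∀ ω, ‖Φ ω‖ ≤ 1 := by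
    intro ω
    have h0 : 0 ≤ ∑ x ∈ X, B x ω := Finset.sum_nonneg fun x _ => hB0 x ω
    have h1 : ∑ x ∈ X, B x ω ≤ N := by
      calc ∑ x ∈ X, B x ω ≤ ∑ x ∈ X, 1 := Finset.sum_le_sum fun x _ => hB1 x ω
        _ = N := by simp [hN]
    rw [hΦ ω, Real.norm_eq_abs, abs_of_nonneg (by positivity)]
    rw [div_mul_eq_mul_div, one_mul, div_le_one hNpos]
    exact h1
  have hmem : MemLp Φ 2 P := by
    have htop : MemLp Φ ⊤ P := memLp_top_of_bound hΦmeas.aestronglyMeasurable 1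
      (Filter.Eventually.of_forall hΦbdd)
    exact htop.mono_exponent le_top
  have hvar : ProbabilityTheory.variance Φ P = S - μ ^ 2 := by
    rw [ProbabilityTheory.variance_eq_sub hmem]
    congr 1
  rw [hvar, hnear]
  field_simp
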